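/- For all integers m ≥ 1 and n ≥ 1, the number of m-tuples (x_1,…,x_m) of integers with 1 ≤ x_i ≤ n for all i, gcd(x_1,…,x_m) = 1, and max_i x_i = n equals ∑_{j=0}^{m−1} (−1)^{m−1−j} · C(m, j) · J_j(n). -/

import Mathlib

def Jh (k n : ℕ) : ℕ :=
  ((Fintype.piFinset fun _ : Fin k => Finset.Icc (1 : ℕ) (n - 1)).filter
    fun x => Nat.gcd (Finset.univ.gcd x) n = 1).card

lemma gcd_off_eq {n j : ℕ} (S : Finset (Fin j)) (x : Fin j → ℕ)
    (hx : ∀ i, i ∉ S → x i = n) :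
    Nat.gcd (Finset.univ.gcd x) n = Nat.gcd (S.gcd x) n := by
  apply Nat.dvd_antisymm
  · exact Nat.dvd_gcd
      (dvd_trans (Nat.gcd_dvd_left _ _) (Finset.gcd_mono (Finset.subset_univ S)))
      (Nat.gcd_dvd_right _ _)
  · refine Nat.dvd_gcd (Finset.dvd_gcd fun i _ => ?_) (Nat.gcd_dvd_right _ _)
    by_cases hi : i ∈ S
    · exact dvd_trans (Nat.gcd_dvd_left _ _) (Finset.gcd_dvd hi)
    · rw [hx i hi]; exact Nat.gcd_dvd_right _ _

lemma emb_image {j : ℕ} (S : Finset (Fin j)) :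
    Finset.image (S.orderEmbOfFin rfl) Finset.univ = S := by
  apply Finset.coe_injective
  rw [Finset.coe_image, Finset.coe_univ, Set.image_univ, Finset.range_orderEmbOfFin]

lemma iso_symm_emb {j : ℕ} (S : Finset (Fin j)) (k : Fin S.card) :
    (S.orderIsoOfFin rfl).symm ⟨S.orderEmbOfFin rfl k, S.orderEmbOfFin_mem rfl k⟩ = k := by
  have h : (⟨S.orderEmbOfFin rfl k, S.orderEmbOfFin_mem rfl k⟩ : {x // x ∈ S})
      = S.orderIsoOfFin rfl k := Subtype.ext (S.coe_orderIsoOfFin_apply rfl k).symm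
  rw [h, OrderIso.symm_apply_apply]

lemma emb_iso_symm {j : ℕ} (S : Finset (Fin j)) (i : Fin j) (hi : i ∈ S) :
    S.orderEmbOfFin rfl ((S.orderIsoOfFin rfl).symm ⟨i, hi⟩) = i := by
  rw [← S.coe_orderIsoOfFin_apply rfl, OrderIso.apply_symm_apply]

lemma gcd_S {j : ℕ} (S : Finset (Fin j)) (f : Fin j → ℕ) :
    S.gcd f = Finset.univ.gcd (fun k => f (S.orderEmbOfFin rfl k)) := by
  conv_lhs => rw [← emb_image S]
  rw [Finset.gcd_image]
  rfl

lemma fiber_card (n j : ℕ) (hn : 1 ≤ n) (S : Finset (Fin j)) :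
    ((Fintype.piFinset fun _ : Fin j => Finset.Icc (1 : ℕ) n).filter
        fun x => Nat.gcd (Finset.univ.gcd x) n = 1 ∧
          (Finset.univ.filter fun i => x i ≠ n) = S).card = Jh S.card n := by
  classical
  rw [Jh]
  refine Finset.card_bij'
    (fun x _ => fun k => x (S.orderEmbOfFin rfl k))
    (fun y _ => fun i => if hi : i ∈ S then y ((S.orderIsoOfFin rfl).symm ⟨i, hi⟩) else n)
    ?_ ?_ ?_ ?_
  · -- forward maps into target
    intro x hx
    rw [Finset.mem_filter, Fintype.mem_piFinset] at hx ⊢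
    have hmem := hx.1
    have hgcd := hx.2.1
    have hS := hx.2.2
    have hoff : ∀ i, i ∉ S → x i = n := by
      intro i hi
      rw [← hS, Finset.mem_filter] at hi
      by_contra hne
      exact hi ⟨Finset.mem_univ i, hne⟩
    have hne : ∀ i, i ∈ S → x i ≠ n := by
      intro i hi
      rw [← hS, Finset.mem_filter] at hi
      exact hi.2
    constructor
    · intro k
      have h1 := hmem (S.orderEmbOfFin rfl k)
      have h2 := hne _ (S.orderEmbOfFin_mem rfl k)
      simp only [Finset.mem_Icc] at h1 ⊢
      omega
    · rw [show Finset.univ.gcd (fun k => x (S.orderEmbOfFin rfl k)) = S.gcd x from (gcd_S S x).symm,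
        ← gcd_off_eq S x hoff]
      exact hgcd
  · -- backward maps into fiber
    intro y hy
    rw [Finset.mem_filter, Fintype.mem_piFinset] at hy ⊢
    obtain ⟨hmem, hgcd⟩ := hy
    have hcomp : ∀ k : Fin S.card,
        (fun i => if hi : i ∈ S then y ((S.orderIsoOfFin rfl).symm ⟨i, hi⟩) else n)
          (S.orderEmbOfFin rfl k) = y k := by
      intro k
      simp only [dif_pos (S.orderEmbOfFin_mem rfl k)]
      rw [iso_symm_emb S k]
    refine ⟨?_, ?_, ?_⟩
    · intro i
      by_cases hi : i ∈ S
      · simp only [dif_pos hi]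
        have := hmem ((S.orderIsoOfFin rfl).symm ⟨i, hi⟩)
        rw [Finset.mem_Icc] at this ⊢
        omega
      · simp only [dif_neg hi, Finset.mem_Icc]
        omega
    · have hoff : ∀ i, i ∉ S →
          (fun i => if hi : i ∈ S then y ((S.orderIsoOfFin rfl).symm ⟨i, hi⟩) else n) i = n := by
        intro i hi; simp only [dif_neg hi]
      rw [gcd_off_eq S _ hoff]
      have h2 : S.gcd (fun i => if hi : i ∈ S then y ((S.orderIsoOfFin rfl).symm ⟨i, hi⟩) else n)
          = Finset.univ.gcd y := by
        rw [gcd_S S]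
        exact Finset.gcd_congr rfl fun k _ => hcomp k
      rw [h2]
      exact hgcd
    · ext i
      simp only [Finset.mem_filter, Finset.mem_univ, true_and]
      by_cases hi : i ∈ S
      · rw [dif_pos hi]
        simp only [hi, iff_true]
        have := hmem ((S.orderIsoOfFin rfl).symm ⟨i, hi⟩)
        rw [Finset.mem_Icc] at this
        omega
      · rw [dif_neg hi]
        simp [hi]
  · -- left inverse
    intro x hx
    rw [Finset.mem_filter] at hx
    have hS := hx.2.2
    have hoff : ∀ i, i ∉ S → x i = n := by
      intro i hi
      rw [← hS, Finset.mem_filter] at hi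
      by_contra hne
      exact hi ⟨Finset.mem_univ i, hne⟩
    funext i
    by_cases hi : i ∈ S
    · simp only [dif_pos hi]
      rw [emb_iso_symm S i hi]
    · simp only [dif_neg hi]
      exact (hoff i hi).symm
  · -- right inverse
    intro y hy
    funext k
    simp only [dif_pos (S.orderEmbOfFin_mem rfl k)]
    rw [iso_symm_emb S k]

/-- Jordan totient: number of `m`-tuples `x` with `1 ≤ xᵢ ≤ n` and `gcd(x₁,…,x_m,n) = 1`. -/
def J (m n : ℕ) : ℕ :=
  ((Fintype.piFinset fun _ : Fin m => Finset.Icc (1 : ℕ) n).filter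
    fun x => Nat.gcd (Finset.univ.gcd x) n = 1).card

lemma J_eq (j n : ℕ) (hn : 1 ≤ n) :
    J j n = ∑ k ∈ Finset.range (j + 1), j.choose k * Jh k n := by
  classical
  rw [J, Finset.card_eq_sum_card_fiberwise
    (f := fun x => Finset.univ.filter fun i => x i ≠ n)
    (t := (Finset.univ : Finset (Fin j)).powerset)
    (fun x _ => Finset.mem_powerset.2 (Finset.filter_subset _ _))]
  have hstep : ∀ S ∈ (Finset.univ : Finset (Fin j)).powerset,
      (Finset.filter (fun x => (Finset.univ.filter fun i => x i ≠ n) = S)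
        ((Fintype.piFinset fun _ : Fin j => Finset.Icc (1 : ℕ) n).filter
          fun x => Nat.gcd (Finset.univ.gcd x) n = 1)).card = Jh S.card n := by
    intro S _
    rw [Finset.filter_filter]
    exact fiber_card n j hn S
  rw [Finset.sum_congr rfl hstep, Finset.sum_powerset]
  rw [Finset.card_univ, Fintype.card_fin]
  refine Finset.sum_congr rfl fun k hk => ?_
  rw [Finset.sum_congr rfl (fun S hS => by rw [(Finset.mem_powersetCard.1 hS).2]),
    Finset.sum_const, Finset.card_powersetCard, Finset.card_univ, Fintype.card_fin, smul_eq_mul]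

lemma split_card (m n : ℕ) (hm : 1 ≤ m) (hn : 1 ≤ n) :
    J m n = ((Fintype.piFinset fun _ : Fin m => Finset.Icc (1 : ℕ) n).filter
        fun x => Finset.univ.gcd x = 1 ∧ Finset.univ.sup x = n).card + Jh m n := by
  classical
  rw [J, ← Finset.card_filter_add_card_filter_not
    (p := fun x : Fin m → ℕ => Finset.univ.sup x = n)]
  congr 1
  · rw [Finset.filter_filter]
    congr 1
    apply Finset.filter_congr
    intro x _
    have hne : (Finset.univ : Finset (Fin m)).Nonempty :=
      ⟨⟨0, hm⟩, Finset.mem_univ _⟩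
    have key : Finset.univ.sup x = n → Nat.gcd (Finset.univ.gcd x) n = Finset.univ.gcd x := by
      intro hsup
      obtain ⟨i, -, hi⟩ := Finset.exists_mem_eq_sup Finset.univ hne x
      have hxi : x i = n := by rw [← hi, hsup]
      exact Nat.gcd_eq_left (hxi ▸ Finset.gcd_dvd (Finset.mem_univ i))
    constructor
    · rintro ⟨hg, hs⟩
      rw [key hs] at hg
      exact ⟨hg, hs⟩
    · rintro ⟨hg, hs⟩
      exact ⟨by rw [key hs, hg], hs⟩
  · rw [Finset.filter_filter, Jh]
    congr 1
    ext x
    simp only [Finset.mem_filter, Fintype.mem_piFinset, Finset.mem_Icc]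
    constructor
    · rintro ⟨hmem, hgcd, hsup⟩
      have hle : Finset.univ.sup x ≤ n := Finset.sup_le fun i _ => (hmem i).2
      have hlt : Finset.univ.sup x < n := lt_of_le_of_ne hle hsup
      exact ⟨fun i => ⟨(hmem i).1, by
        have := Finset.le_sup (f := x) (Finset.mem_univ i); omega⟩, hgcd⟩
    · rintro ⟨hmem, hgcd⟩
      refine ⟨fun i => ⟨(hmem i).1, by have := (hmem i).2; omega⟩, hgcd, ?_⟩
      have hle : Finset.univ.sup x ≤ n - 1 := Finset.sup_le fun i _ => (hmem i).2
      omega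

lemma binom_inner_sum (m k : ℕ) (hk : k ≤ m) :
    ∑ j ∈ Finset.range (m + 1), (-1 : ℤ) ^ (m - j) * (m.choose j : ℤ) * (j.choose k : ℤ) =
      if k = m then 1 else 0 := by
  rw [Finset.range_eq_Ico, ← Finset.sum_Ico_consecutive _ (Nat.zero_le k) (by omega : k ≤ m + 1)]
  rw [Finset.sum_eq_zero (fun j hj => by
    rw [Finset.mem_Ico] at hj
    rw [Nat.choose_eq_zero_of_lt hj.2]
    push_cast
    ring), zero_add]
  rw [Finset.sum_Ico_eq_sum_range]
  have hsub : m + 1 - k = (m - k) + 1 := by omega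
  rw [hsub]
  have hterm : ∀ i ∈ Finset.range (m - k + 1),
      (-1 : ℤ) ^ (m - (k + i)) * ((m.choose (k + i) : ℤ)) * ((k + i).choose k : ℤ) =
        (m.choose k : ℤ) * ((-1 : ℤ) ^ (m - k) * ((-1 : ℤ) ^ i * ((m - k).choose i : ℤ))) := by
    intro i hi
    rw [Finset.mem_range] at hi
    have hle : k + i ≤ m := by omega
    have hch : (m.choose (k + i)) * ((k + i).choose k) = m.choose k * (m - k).choose i := by
      have := Nat.choose_mul (n := m) (Nat.le_add_right k i)
      simpa using this
    have hsign : (-1 : ℤ) ^ (m - (k + i)) = (-1 : ℤ) ^ (m - k) * (-1 : ℤ) ^ i := by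
      have h1 : m - k = (m - (k + i)) + i := by omega
      rw [h1, pow_add, mul_assoc, ← mul_pow]
      norm_num
    rw [hsign]
    have hch' := congrArg (Nat.cast (R := ℤ)) hch
    push_cast at hch'
    linear_combination ((-1 : ℤ) ^ (m - k) * (-1 : ℤ) ^ i) * hch'
  rw [Finset.sum_congr rfl hterm, ← Finset.mul_sum, ← Finset.mul_sum,
    Int.alternating_sum_range_choose]
  by_cases hkm : k = m
  · simp [hkm]
  · have : m - k ≠ 0 := by omega
    simp [this, hkm]

lemma binom_inv (m : ℕ) (f g : ℕ → ℤ)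
    (h : ∀ j ∈ Finset.range (m + 1), f j = ∑ k ∈ Finset.range (j + 1), (j.choose k : ℤ) * g k) :
    ∑ j ∈ Finset.range (m + 1), (-1 : ℤ) ^ (m - j) * (m.choose j : ℤ) * f j = g m := by
  have hstep : ∀ j ∈ Finset.range (m + 1),
      (-1 : ℤ) ^ (m - j) * (m.choose j : ℤ) * f j =
        ∑ k ∈ Finset.range (m + 1),
          (-1 : ℤ) ^ (m - j) * (m.choose j : ℤ) * ((j.choose k : ℤ) * g k) := by
    intro j hj
    rw [Finset.mem_range] at hj
    rw [h j (Finset.mem_range.2 hj), Finset.mul_sum]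
    apply Finset.sum_subset (Finset.range_subset_range.2 (by omega))
    intro k hk hk'
    rw [Finset.mem_range] at hk
    rw [Finset.mem_range, not_lt] at hk'
    rw [Nat.choose_eq_zero_of_lt (show j < k by omega)]
    push_cast
    ring
  rw [Finset.sum_congr rfl hstep, Finset.sum_comm]
  have hinner : ∀ k ∈ Finset.range (m + 1),
      ∑ j ∈ Finset.range (m + 1),
        (-1 : ℤ) ^ (m - j) * (m.choose j : ℤ) * ((j.choose k : ℤ) * g k) =
      (if k = m then 1 else 0) * g k := by
    intro k hk
    rw [Finset.mem_range] at hk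
    rw [← binom_inner_sum m k (by omega), Finset.sum_mul]
    exact Finset.sum_congr rfl fun j _ => by ring
  rw [Finset.sum_congr rfl hinner]
  simp

theorem count_visible_with_max_eq (m n : ℕ) (hm : 1 ≤ m) (hn : 1 ≤ n) :
    ((((Fintype.piFinset fun _ : Fin m => Finset.Icc (1 : ℕ) n).filter
        fun x => Finset.univ.gcd x = 1 ∧ Finset.univ.sup x = n).card : ℤ)) =
      ∑ j ∈ Finset.range m, (-1 : ℤ) ^ (m - 1 - j) * (m.choose j : ℤ) * (J j n : ℤ) := by
  classical
  have hJ := congrArg (Nat.cast (R := ℤ)) (split_card m n hm hn)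
  push_cast at hJ
  have hinv : ∑ j ∈ Finset.range (m + 1),
      (-1 : ℤ) ^ (m - j) * (m.choose j : ℤ) * (J j n : ℤ) = (Jh m n : ℤ) := by
    apply binom_inv
    intro j _
    rw [J_eq j n hn]
    push_cast
    rfl
  rw [Finset.sum_range_succ] at hinv
  simp only [Nat.sub_self, pow_zero, Nat.choose_self, Nat.cast_one, one_mul] at hinv
  have hsign : ∀ j ∈ Finset.range m,
      (-1 : ℤ) ^ (m - 1 - j) * (m.choose j : ℤ) * (J j n : ℤ) =
        -((-1 : ℤ) ^ (m - j) * (m.choose j : ℤ) * (J j n : ℤ)) := by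
    intro j hj
    rw [Finset.mem_range] at hj
    rw [show m - j = (m - 1 - j) + 1 by omega, pow_succ]
    ring
  rw [Finset.sum_congr rfl hsign, Finset.sum_neg_distrib]
  linarith
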